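/- Let τ = τ_ω be the end tangle of an end ω of G and k ∈ ℕ with deg(ω) + dom(ω) ≥ k. Then τ ∩ S⃗_k has a relative decider X of size exactly k: a set X ⊆ V with |X| = k such that |A∩X| < |B∩X| for every (A,B) ∈ τ with |A∩B| < k. -/

import Mathlib

open Set

universe u

/-- A separation of a graph `G`: a pair of vertex sets covering `V` with no
edge between `A \ B` and `B \ A`. -/
structure Separation {V : Type u} (G : SimpleGraph V) where
  A : Set V
  B : Set V
  union_eq : A ∪ B = Set.univ
  no_edge : ∀ a ∈ A \ B, ∀ b ∈ B \ A, ¬ G.Adj a b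

/-- The oriented separations of finite order. -/
abbrev FinSep {V : Type u} (G : SimpleGraph V) := {s : Separation G // (s.A ∩ s.B).Finite}

/-- The separation topology: basic open sets prescribe the restriction of a
separation to a finite vertex set `Z`. -/
instance sepTop {V : Type u} (G : SimpleGraph V) : TopologicalSpace (FinSep G) :=
  TopologicalSpace.generateFrom
    {O | ∃ Z AZ BZ : Set V, Z.Finite ∧
      O = {s : FinSep G | s.1.A ∩ Z = AZ ∧ s.1.B ∩ Z = BZ}}

/-- The reverse orientation of a finite-order separation. -/
def FinSep.rev {V : Type u} {G : SimpleGraph V} (s : FinSep G) : FinSep G :=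
  ⟨⟨s.1.B, s.1.A, by rw [Set.union_comm]; exact s.1.union_eq,
    fun a ha b hb h => s.1.no_edge b hb a ha h.symm⟩,
   by rw [Set.inter_comm]; exact s.2⟩

/-- A ray in a graph: an injective sequence of successively adjacent vertices. -/
structure GraphRay {V : Type u} (G : SimpleGraph V) where
  f : ℕ → V
  inj : Function.Injective f
  adj : ∀ n, G.Adj (f n) (f (n + 1))

/-- Two rays are equivalent if no finite vertex set separates them. -/
def RayEquiv {V : Type u} (G : SimpleGraph V) (R R' : GraphRay G) : Prop :=
  ∀ F : Set V, F.Finite →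
    ∃ (m n : ℕ) (w : G.Walk (R.f m) (R'.f n)), ∀ x ∈ w.support, x ∉ F

/-- An end of a graph: a (nonempty) equivalence class of rays. -/
structure GraphEnd {V : Type u} (G : SimpleGraph V) where
  rays : Set (GraphRay G)
  nonempty : rays.Nonempty
  mem_iff : ∀ R ∈ rays, ∀ R', R' ∈ rays ↔ RayEquiv G R R'

/-- A ray has a tail in `B`. -/
def HasTailIn {V : Type u} {G : SimpleGraph V} (R : GraphRay G) (B : Set V) : Prop :=
  ∃ N, ∀ n ≥ N, R.f n ∈ B

/-- The end tangle induced by the end `ω`: all finite-order separations `(A,B)`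
such that every ray of `ω` has a tail in `B`. -/
def endTangle {V : Type u} {G : SimpleGraph V} (ω : GraphEnd G) : Set (FinSep G) :=
  {s | ∀ R ∈ ω.rays, HasTailIn R s.1.B}

/-- `v` dominates the end `ω`: `v` sends infinitely many paths to a ray of `ω`
which pairwise meet only in `v`. -/
def Dominates {V : Type u} (G : SimpleGraph V) (v : V) (ω : GraphEnd G) : Prop :=
  ∃ R ∈ ω.rays, ∃ p : ℕ → (n : ℕ) × G.Walk v (R.f n),
    (∀ i, (p i).2.IsPath) ∧ (Function.Injective fun i => (p i).1) ∧
    ∀ i j, i ≠ j → ∀ x, x ∈ (p i).2.support → x ∈ (p j).2.support → x = v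

/-- The end `ω` has (vertex) degree at least `m`: there are `m` pairwise
disjoint rays belonging to `ω`. -/
def DegGE {V : Type u} (G : SimpleGraph V) (ω : GraphEnd G) (m : ℕ) : Prop :=
  ∃ R : Fin m → GraphRay G, (∀ i, R i ∈ ω.rays) ∧
    ∀ i j, i ≠ j → Disjoint (Set.range (R i).f) (Set.range (R j).f)

/-- At least `n` vertices dominate `ω`. -/
def DomGE {V : Type u} (G : SimpleGraph V) (ω : GraphEnd G) (n : ℕ) : Prop :=
  ∃ D : Finset V, D.card = n ∧ ∀ v ∈ D, Dominates G v ω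

/-- `deg(ω) + dom(ω) ≥ k`. -/
def DegDomGE {V : Type u} (G : SimpleGraph V) (ω : GraphEnd G) (k : ℕ) : Prop :=
  ∃ m n, m + n = k ∧ DegGE G ω m ∧ DomGE G ω n

/-- `T` separates `X` from the end `ω`: every ray of `ω` meeting `X` meets `T`. -/
def SeparatesFromEnd {V : Type u} (G : SimpleGraph V) (X T : Set V) (ω : GraphEnd G) : Prop :=
  ∀ R ∈ ω.rays, (∃ n, R.f n ∈ X) → ∃ n, R.f n ∈ T

/-- `K` is `(<ℵ₀)`-inseparable (apart from the infiniteness requirement): no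
finite-order separation separates two of its vertices. -/
def FinInseparable {V : Type u} (G : SimpleGraph V) (K : Set V) : Prop :=
  ∀ s : FinSep G, ∀ x ∈ K, ∀ y ∈ K, ¬(x ∈ s.1.A \ s.1.B ∧ y ∈ s.1.B \ s.1.A)

/-- An `ℵ₀`-block: a maximal infinite set of vertices no two of which can be
separated by a finite-order separation. -/
def Aleph0Block {V : Type u} (G : SimpleGraph V) (K : Set V) : Prop :=
  K.Infinite ∧ FinInseparable G K ∧
    ∀ K' : Set V, K ⊆ K' → K'.Infinite → FinInseparable G K' → K' = K
section Part1
variable {V : Type u} {G : SimpleGraph V}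

lemma Separation.mem_B_of_not (s : Separation G) {v : V} (h : v ∉ s.A \ s.B) : v ∈ s.B := by
  by_cases hA : v ∈ s.A
  · by_contra hB; exact h ⟨hA, hB⟩
  · have : v ∈ s.A ∪ s.B := by rw [s.union_eq]; trivial
    exact this.resolve_left hA

lemma Separation.mem_A_or_B (s : Separation G) (v : V) : v ∈ s.A ∨ v ∈ s.B := by
  have : v ∈ s.A ∪ s.B := by rw [s.union_eq]; trivial
  exact this

/-- A walk whose support meets `A\B` and also leaves `A\B` must contain a
vertex of the separator `A∩B`. -/
lemma walk_scan (s : Separation G) {u v : V} (w : G.Walk u v)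
    (hx : ∃ x ∈ w.support, x ∈ s.A \ s.B) (hy : ∃ y ∈ w.support, y ∉ s.A \ s.B) :
    ∃ z ∈ w.support, z ∈ s.A ∩ s.B := by
  induction w with
  | nil =>
    obtain ⟨x, hxm, hx⟩ := hx
    obtain ⟨y, hym, hy⟩ := hy
    simp only [SimpleGraph.Walk.support_nil, List.mem_singleton] at hxm hym
    subst hxm; subst hym; exact absurd hx hy
  | @cons u u' v h w ih =>
    by_cases hu : u ∈ s.A \ s.B
    · by_cases hu' : u' ∈ s.A \ s.B
      · have hy' : ∃ y ∈ w.support, y ∉ s.A \ s.B := by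
          obtain ⟨y, hym, hy⟩ := hy
          refine ⟨y, ?_, hy⟩
          simp only [SimpleGraph.Walk.support_cons, List.mem_cons] at hym
          rcases hym with rfl | hym
          · exact absurd hu hy
          · exact hym
        obtain ⟨z, hz, hz2⟩ := ih ⟨u', w.start_mem_support, hu'⟩ hy'
        exact ⟨z, by simp [hz], hz2⟩
      · have hu'B : u' ∈ s.B := s.mem_B_of_not hu'
        have hu'A : u' ∈ s.A := by
          by_contra hA
          exact s.no_edge u hu u' ⟨hu'B, hA⟩ h
        exact ⟨u', by simp [w.start_mem_support], hu'A, hu'B⟩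
    · have huB : u ∈ s.B := s.mem_B_of_not hu
      by_cases huA : u ∈ s.A
      · exact ⟨u, by simp, huA, huB⟩
      · -- u ∈ B \ A
        by_cases hu' : u' ∈ s.A \ s.B
        · exact absurd h.symm (s.no_edge u' hu' u ⟨huB, huA⟩)
        · obtain ⟨x, hxm, hxp⟩ := hx
          have hxm' : x ∈ w.support := by
            simp only [SimpleGraph.Walk.support_cons, List.mem_cons] at hxm
            rcases hxm with rfl | hxm
            · exact absurd hxp hu
            · exact hxm
          obtain ⟨z, hz, hz2⟩ := ih ⟨x, hxm', hxp⟩ ⟨u', w.start_mem_support, hu'⟩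
          exact ⟨z, by simp [hz], hz2⟩

lemma ray_firstB (s : Separation G) (R : GraphRay G) (htail : HasTailIn R s.B)
    {g : ℕ} (hg : R.f g ∈ s.A \ s.B) :
    ∃ t, g < t ∧ R.f t ∈ s.A ∩ s.B := by
  classical
  obtain ⟨N, hN⟩ := htail
  have hex : ∃ t, g ≤ t ∧ R.f t ∈ s.B :=
    ⟨max N g, le_max_right _ _, hN _ (le_max_left _ _)⟩
  set t := Nat.find hex with ht_def
  obtain ⟨htg, htB⟩ : g ≤ t ∧ R.f t ∈ s.B := Nat.find_spec hex
  have htne : g < t := by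
    rcases lt_or_eq_of_le htg with h | h
    · exact h
    · exact absurd (h ▸ htB) hg.2
  have hpredB : R.f (t - 1) ∉ s.B := by
    intro hB
    exact Nat.find_min hex (show t - 1 < t by omega) ⟨by omega, hB⟩
  have hpred : R.f (t - 1) ∈ s.A \ s.B := ⟨(s.mem_A_or_B _).resolve_right hpredB, hpredB⟩
  have hadj : G.Adj (R.f (t - 1)) (R.f t) := by
    have := R.adj (t - 1)
    rwa [Nat.sub_add_cancel (by omega : 1 ≤ t)] at this
  have htA : R.f t ∈ s.A := by
    by_contra hA
    exact s.no_edge _ hpred _ ⟨htB, hA⟩ hadj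
  exact ⟨t, htne, htA, htB⟩

lemma ray_lastB (s : Separation G) (R : GraphRay G) {g : ℕ}
    (hg : R.f g ∈ s.A \ s.B) (hex : ∃ g', g' ≤ g ∧ R.f g' ∉ s.A \ s.B) :
    ∃ t, t < g ∧ R.f t ∈ s.A ∩ s.B := by
  classical
  set P : ℕ → Prop := fun g' => R.f g' ∉ s.A \ s.B with hP
  obtain ⟨g0, hg0le, hg0⟩ := hex
  set t := Nat.findGreatest P g with ht_def
  have hPt : P t := Nat.findGreatest_spec hg0le hg0
  have htle : t ≤ g := Nat.findGreatest_le g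
  have htlt : t < g := by
    rcases lt_or_eq_of_le htle with h | h
    · exact h
    · exact absurd (h ▸ hPt) (by simpa [hP] using hg)
  have hsucc : R.f (t + 1) ∈ s.A \ s.B := by
    by_contra hc
    exact (Nat.findGreatest_is_greatest (lt_add_one t) (by omega)) hc
  have htB : R.f t ∈ s.B := s.mem_B_of_not (by simpa [hP] using hPt)
  have hadj : G.Adj (R.f t) (R.f (t + 1)) := R.adj t
  have htA : R.f t ∈ s.A := by
    by_contra hA
    exact s.no_edge _ hsucc _ ⟨htB, hA⟩ hadj.symm
  exact ⟨t, htlt, htA, htB⟩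

end Part1
section Part2
variable {V : Type u} {G : SimpleGraph V}

/-- The tail of a ray. -/
def GraphRay.shift (R : GraphRay G) (N : ℕ) : GraphRay G where
  f := fun n => R.f (n + N)
  inj := fun a b hab => by
    have := R.inj hab; omega
  adj := fun n => by
    have := R.adj (n + N)
    rwa [show n + N + 1 = n + 1 + N by omega] at this

lemma ray_hits_finite (R : GraphRay G) {F : Set V} (hF : F.Finite) :
    {n | R.f n ∈ F}.Finite :=
  hF.preimage R.inj.injOn

lemma ray_bound (R : GraphRay G) {F : Set V} (hF : F.Finite) :
    ∃ N, ∀ t, N ≤ t → R.f t ∉ F := by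
  obtain ⟨b, hb⟩ := (ray_hits_finite R hF).bddAbove
  exact ⟨b + 1, fun t ht hmem => by have := hb hmem; omega⟩

lemma shift_mem (ω : GraphEnd G) {R : GraphRay G} (hR : R ∈ ω.rays) (N : ℕ) :
    R.shift N ∈ ω.rays := by
  refine (ω.mem_iff R hR _).mpr ?_
  intro F hF
  obtain ⟨M, hM⟩ := ray_bound R hF
  refine ⟨M + N, M, SimpleGraph.Walk.nil, ?_⟩
  intro x hx
  replace hx : x = R.f (M + N) := List.mem_singleton.mp hx
  subst hx
  exact hM _ (by omega)

lemma rayEquiv_of_mem (ω : GraphEnd G) {R R' : GraphRay G}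
    (hR : R ∈ ω.rays) (hR' : R' ∈ ω.rays) : RayEquiv G R R' :=
  (ω.mem_iff R hR R').mp hR'

/-- Walk along a ray. -/
def segWalk (R : GraphRay G) (a : ℕ) : (d : ℕ) → G.Walk (R.f a) (R.f (a + d))
  | 0 => SimpleGraph.Walk.nil
  | d + 1 => (segWalk R a d).concat (R.adj (a + d))

lemma segWalk_support (R : GraphRay G) (a d : ℕ) :
    ∀ x ∈ (segWalk R a d).support, ∃ t, a ≤ t ∧ t ≤ a + d ∧ x = R.f t := by
  induction d with
  | zero =>
    intro x hx
    simp only [segWalk, SimpleGraph.Walk.support_nil, List.mem_singleton] at hx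
    exact ⟨a, le_refl _, by omega, hx⟩
  | succ d ih =>
    intro x hx
    simp only [segWalk, SimpleGraph.Walk.support_concat, List.concat_eq_append,
      List.mem_append, List.mem_singleton] at hx
    rcases hx with hx | hx
    · obtain ⟨t, h1, h2, h3⟩ := ih x hx
      exact ⟨t, h1, by omega, h3⟩
    · exact ⟨a + d + 1, by omega, by omega, hx⟩

lemma seg_between (R : GraphRay G) (a b : ℕ) :
    ∃ w : G.Walk (R.f a) (R.f b),
      ∀ x ∈ w.support, ∃ t, min a b ≤ t ∧ t ≤ max a b ∧ x = R.f t := by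
  rcases le_total a b with hab | hab
  · refine ⟨(segWalk R a (b - a)).copy rfl (by rw [Nat.add_sub_cancel' hab]), ?_⟩
    intro x hx
    rw [SimpleGraph.Walk.support_copy] at hx
    obtain ⟨t, h1, h2, h3⟩ := segWalk_support R a (b - a) x hx
    exact ⟨t, by omega, by omega, h3⟩
  · refine ⟨((segWalk R b (a - b)).copy rfl (by rw [Nat.add_sub_cancel' hab])).reverse, ?_⟩
    intro x hx
    rw [SimpleGraph.Walk.support_reverse, List.mem_reverse, SimpleGraph.Walk.support_copy] at hx
    obtain ⟨t, h1, h2, h3⟩ := segWalk_support R b (a - b) x hx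
    exact ⟨t, by omega, by omega, h3⟩

/-- A walk between two equivalent rays avoiding a finite set, with both
endpoint indices bounded below. -/
lemma reach (ω : GraphEnd G) {R R' : GraphRay G} (hR : R ∈ ω.rays) (hR' : R' ∈ ω.rays)
    {F : Set V} (hF : F.Finite) (N N' : ℕ) :
    ∃ (p q : ℕ) (w : G.Walk (R.f p) (R'.f q)), N ≤ p ∧ N' ≤ q ∧
      ∀ x ∈ w.support, x ∉ F := by
  have hF2 : (F ∪ R.f '' Set.Iio N ∪ R'.f '' Set.Iio N').Finite :=
    ((hF.union ((Set.finite_Iio N).image _)).union ((Set.finite_Iio N').image _))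
  obtain ⟨p, q, w, hw⟩ := rayEquiv_of_mem ω hR hR' _ hF2
  refine ⟨p, q, w, ?_, ?_, fun x hx hxF => hw x hx (Or.inl (Or.inl hxF))⟩
  · by_contra hc
    exact hw _ w.start_mem_support (Or.inl (Or.inr ⟨p, Set.mem_Iio.mpr (by omega), rfl⟩))
  · by_contra hc
    exact hw _ w.end_mem_support (Or.inr ⟨q, Set.mem_Iio.mpr (by omega), rfl⟩)

end Part2
section Part3
variable {V : Type u} {G : SimpleGraph V}

/-- Every dominating vertex lies in `B` for every separation in the end tangle. -/
lemma dom_mem_B (ω : GraphEnd G) {s : Separation G} (hfin : (s.A ∩ s.B).Finite)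
    (hs : ∀ R ∈ ω.rays, HasTailIn R s.B) {v : V} (hv : Dominates G v ω) :
    v ∈ s.B := by
  by_contra hvB
  have hvA : v ∈ s.A \ s.B := ⟨(s.mem_A_or_B v).resolve_right hvB, hvB⟩
  obtain ⟨R, hR, p, hpath, hinj, hmeet⟩ := hv
  obtain ⟨N, hN⟩ := hs R hR
  have hgood : {i : ℕ | N ≤ (p i).1}.Infinite := by
    have hfin2 : {i : ℕ | (p i).1 < N}.Finite :=
      (Set.finite_Iio N).preimage hinj.injOn
    have := hfin2.infinite_compl
    apply Set.Infinite.mono _ this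
    intro i hi
    simp only [Set.mem_compl_iff, Set.mem_setOf_eq] at hi ⊢
    omega
  haveI := hgood.to_subtype
  have hz : ∀ i : {i : ℕ | N ≤ (p i).1}, ∃ z, z ∈ (p i.1).2.support ∧ z ∈ s.A ∩ s.B := by
    rintro ⟨i, hi⟩
    have := walk_scan s (p i).2 ⟨v, (p i).2.start_mem_support, hvA⟩
      ⟨R.f (p i).1, SimpleGraph.Walk.end_mem_support _, fun hmem => hmem.2 (hN _ hi)⟩
    obtain ⟨z, h1, h2⟩ := this
    exact ⟨z, h1, h2⟩
  choose z hz1 hz2 using hz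
  have hzinj : Function.Injective z := by
    rintro ⟨i, hi⟩ ⟨j, hj⟩ hij
    by_contra hne
    have hij' : i ≠ j := fun hc => hne (by simpa using hc)
    have := hmeet i j hij' (z ⟨i, hi⟩) (hz1 _) (hij ▸ hz1 ⟨j, hj⟩)
    exact hvB (this ▸ (hz2 ⟨i, hi⟩).2)
  exact (Set.infinite_of_injective_forall_mem hzinj hz2) hfin

/-- A dominating vertex can reach any ray of the end via a walk avoiding any
finite set. -/
lemma dom_reach (ω : GraphEnd G) {v : V} (hv : Dominates G v ω)
    {R' : GraphRay G} (hR' : R' ∈ ω.rays) {F : Set V} (hF : F.Finite) (hvF : v ∉ F) :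
    ∃ (g : ℕ) (w : G.Walk v (R'.f g)), ∀ x ∈ w.support, x ∉ F := by
  obtain ⟨R, hR, p, hpath, hinj, hmeet⟩ := hv
  obtain ⟨Nf, hNf⟩ := ray_bound R hF
  have hbad1 : {i : ℕ | ∃ x ∈ (p i).2.support, x ∈ F}.Finite := by
    have hsub : {i : ℕ | ∃ x ∈ (p i).2.support, x ∈ F} ⊆
        ⋃ f ∈ F, {i : ℕ | f ∈ (p i).2.support} := by
      rintro i ⟨x, hx1, hx2⟩
      exact Set.mem_biUnion hx2 hx1
    refine Set.Finite.subset (hF.biUnion fun f hf => ?_) hsub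
    refine Set.Subsingleton.finite ?_
    intro i hi j hj
    by_contra hij
    exact hvF ((hmeet i j hij f hi hj) ▸ hf)
  have hbad2 : {i : ℕ | (p i).1 < Nf}.Finite := (Set.finite_Iio Nf).preimage hinj.injOn
  obtain ⟨i, hi⟩ := (hbad1.union hbad2).infinite_compl.nonempty
  simp only [Set.mem_compl_iff, Set.mem_union, Set.mem_setOf_eq, not_or, not_exists,
    not_lt] at hi
  obtain ⟨hi1, hi2⟩ := hi
  obtain ⟨p', q, w2, hp', hq, hw2⟩ := reach ω hR hR' hF ((p i).1) 0
  obtain ⟨w1, hw1⟩ := seg_between R ((p i).1) p'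
  refine ⟨q, (p i).2.append (w1.append w2), ?_⟩
  intro x hx
  rw [SimpleGraph.Walk.mem_support_append_iff] at hx
  rcases hx with hx | hx
  · exact fun hxF => hi1 x ⟨hx, hxF⟩
  · rw [SimpleGraph.Walk.mem_support_append_iff] at hx
    rcases hx with hx | hx
    · obtain ⟨t, h1, h2, rfl⟩ := hw1 x hx
      exact hNf t (by omega)
    · exact hw2 x hx

/-- A fan of `k` walks from a dominating vertex to a ray, pairwise meeting
only in the dominating vertex. -/
lemma dom_fan (ω : GraphEnd G) {v : V} (hv : Dominates G v ω)
    {R' : GraphRay G} (hR' : R' ∈ ω.rays) (k : ℕ) :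
    ∃ L : List ((g : ℕ) × G.Walk v (R'.f g)), L.length = k ∧
      L.Pairwise (fun a b => ∀ x, x ∈ a.2.support → x ∈ b.2.support → x = v) := by
  induction k with
  | zero => exact ⟨[], rfl, List.Pairwise.nil⟩
  | succ k ih =>
    obtain ⟨L, hlen, hpw⟩ := ih
    set F : Set V := {x | (∃ a ∈ L, x ∈ a.2.support) ∧ x ≠ v} with hF_def
    have hFfin : F.Finite := by
      have : F ⊆ ⋃ a ∈ {a | a ∈ L}, {x | x ∈ a.2.support} := by
        rintro x ⟨⟨a, ha, hxa⟩, _⟩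
        exact Set.mem_biUnion ha hxa
      exact Set.Finite.subset (L.finite_toSet.biUnion fun a _ => a.2.support.finite_toSet) this
    have hvF : v ∉ F := fun hc => hc.2 rfl
    obtain ⟨g, w, hw⟩ := dom_reach ω hv hR' hFfin hvF
    refine ⟨⟨g, w⟩ :: L, by simp [hlen], List.Pairwise.cons ?_ hpw⟩
    intro a ha x hx1 hx2
    by_contra hne
    exact hw x hx1 ⟨⟨a, ha, hx2⟩, hne⟩

/-- A finite walk visiting every ray in a list, starting on a given ray at a
controllably large index, avoiding a finite set. -/
lemma bar_walk (ω : GraphEnd G) (Rs : List (GraphRay G)) (hRs : ∀ R ∈ Rs, R ∈ ω.rays)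
    {R0 : GraphRay G} (hR0 : R0 ∈ ω.rays) {F : Set V} (hF : F.Finite) (N : ℕ) :
    ∃ (st : ℕ) (vv : V) (w : G.Walk (R0.f st) vv), N ≤ st ∧
      (∀ x ∈ w.support, x ∉ F) ∧ ∀ R ∈ Rs, ∃ x ∈ w.support, x ∈ Set.range R.f := by
  induction Rs generalizing N with
  | nil =>
    obtain ⟨Nf, hNf⟩ := ray_bound R0 hF
    refine ⟨max N Nf, _, SimpleGraph.Walk.nil, le_max_left _ _, ?_, by simp⟩
    intro x hx
    simp only [SimpleGraph.Walk.support_nil, List.mem_singleton] at hx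
    subst hx
    exact hNf _ (le_max_right _ _)
  | cons R Rs' ih =>
    obtain ⟨Nf, hNf⟩ := ray_bound R0 hF
    obtain ⟨st₁, v₁, w1, hst₁, hw1F, hw1vis⟩ := ih (fun R hR => hRs R (by simp [hR])) (max N Nf)
    obtain ⟨p, q, w2, hp, hq, hw2⟩ :=
      reach ω hR0 (hRs R (by simp)) hF (max (max N Nf) st₁) 0
    obtain ⟨w3, hw3⟩ := seg_between R0 p st₁
    refine ⟨p, v₁, (w2.append w2.reverse).append (w3.append w1), ?_, ?_, ?_⟩
    · omega
    · intro x hx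
      rw [SimpleGraph.Walk.mem_support_append_iff] at hx
      rcases hx with hx | hx
      · rw [SimpleGraph.Walk.mem_support_append_iff] at hx
        rcases hx with hx | hx
        · exact hw2 x hx
        · rw [SimpleGraph.Walk.support_reverse, List.mem_reverse] at hx
          exact hw2 x hx
      · rw [SimpleGraph.Walk.mem_support_append_iff] at hx
        rcases hx with hx | hx
        · obtain ⟨t, h1, h2, rfl⟩ := hw3 x hx
          have : Nf ≤ t := by omega
          exact hNf t this
        · exact hw1F x hx
    · intro R'' hR''
      rcases List.mem_cons.mp hR'' with rfl | hR''
      · refine ⟨R''.f q, ?_, ⟨q, rfl⟩⟩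
        simp only [SimpleGraph.Walk.mem_support_append_iff]
        exact Or.inl (Or.inl w2.end_mem_support)
      · obtain ⟨x, hx1, hx2⟩ := hw1vis R'' hR''
        refine ⟨x, ?_, hx2⟩
        simp only [SimpleGraph.Walk.mem_support_append_iff]
        exact Or.inr (Or.inr hx1)

/-- `k` pairwise disjoint "bars": finite walks each visiting every ray. -/
lemma bars (ω : GraphEnd G) (Rs : List (GraphRay G)) (hRs : ∀ R ∈ Rs, R ∈ ω.rays)
    {R0 : GraphRay G} (hR0 : R0 ∈ ω.rays) (k : ℕ) :
    ∃ L : List ((st : ℕ) × (vv : V) × G.Walk (R0.f st) vv), L.length = k ∧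
      (∀ a ∈ L, ∀ R ∈ Rs, ∃ x ∈ a.2.2.support, x ∈ Set.range R.f) ∧
      L.Pairwise (fun a b => ∀ x, x ∈ a.2.2.support → x ∉ b.2.2.support) := by
  induction k with
  | zero => exact ⟨[], rfl, by simp, List.Pairwise.nil⟩
  | succ k ih =>
    obtain ⟨L, hlen, hvis, hpw⟩ := ih
    set F : Set V := {x | ∃ a ∈ L, x ∈ a.2.2.support} with hF_def
    have hFfin : F.Finite := by
      refine Set.Finite.subset (L.finite_toSet.biUnion
        fun a (_ : a ∈ {a | a ∈ L}) => a.2.2.support.finite_toSet) ?_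
      rintro x ⟨a, ha, hx⟩
      exact Set.mem_biUnion ha hx
    obtain ⟨st, vv, w, _, hwF, hwvis⟩ := bar_walk ω Rs hRs hR0 hFfin 0
    refine ⟨⟨st, vv, w⟩ :: L, by simp [hlen], ?_, List.Pairwise.cons ?_ hpw⟩
    · intro a ha R hR
      rcases List.mem_cons.mp ha with rfl | ha
      · exact hwvis R hR
      · exact hvis a ha R hR
    · intro a ha x hx1 hx2
      exact hwF x hx1 ⟨a, ha, hx2⟩

end Part3
section Part4
variable {V : Type u} {G : SimpleGraph V}

lemma card_le_of_inj {k : ℕ} {S : Set V} (hS : S.Finite) (f : Fin k → V)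
    (hinj : Function.Injective f) (hmem : ∀ j, f j ∈ S) : k ≤ S.ncard := by
  classical
  have h1 : (Finset.univ.image f).card = k := by
    rw [Finset.card_image_of_injective _ hinj, Finset.card_univ, Fintype.card_fin]
  have h2 : Finset.univ.image f ⊆ hS.toFinset := by
    intro v hv
    obtain ⟨j, _, rfl⟩ := Finset.mem_image.mp hv
    exact hS.mem_toFinset.mpr (hmem j)
  rw [Set.ncard_eq_toFinset_card S hS]
  exact h1 ▸ Finset.card_le_card h2

end Part4

/-- if `deg(ω) + dom(ω) ≥ k` then `τ_ω ∩ S⃗_k` has a relative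
decider of size exactly `k`. -/
theorem decider_of_size_k {V : Type u} (G : SimpleGraph V) (ω : GraphEnd G)
    (k : ℕ) (h : DegDomGE G ω k) :
    ∃ X : Finset V, X.card = k ∧
      ∀ s ∈ endTangle ω, (s.1.A ∩ s.1.B).ncard < k →
        (s.1.A ∩ ↑X).ncard < (s.1.B ∩ ↑X).ncard := by
  classical
  obtain ⟨m, n, hk, ⟨R0, hR0mem, hR0disj⟩, ⟨D, hDcard, hDdom⟩⟩ := h
  -- Re-root the rays beyond all of their (finitely many) hits of `D`.
  have hshift : ∀ i : Fin m, ∃ N, ∀ t, N ≤ t → (R0 i).f t ∉ (↑D : Set V) :=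
    fun i => ray_bound (R0 i) D.finite_toSet
  choose N hN using hshift
  set R : Fin m → GraphRay G := fun i => (R0 i).shift (N i) with hR_def
  have hRmem : ∀ i, R i ∈ ω.rays := fun i => shift_mem ω (hR0mem i) (N i)
  have hRD : ∀ (i : Fin m) (t : ℕ), (R i).f t ∉ D := by
    intro i t
    exact hN i (t + N i) (by omega)
  have hRrange : ∀ i, Set.range (R i).f ⊆ Set.range (R0 i).f := by
    rintro i y ⟨t, rfl⟩
    exact ⟨t + N i, rfl⟩
  have hrayinj : ∀ {i j : Fin m} {t t' : ℕ}, (R i).f t = (R j).f t' → i = j := by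
    intro i j t t' hij
    by_contra hne
    exact Set.disjoint_left.mp
      (hR0disj i j hne) (hRrange i ⟨t, rfl⟩) (hRrange j ⟨t', hij.symm⟩)
  -- Fans of `k` walks from each dominating vertex to each ray.
  have hWex : ∀ (d : {v // v ∈ D}) (l : Fin m),
      ∃ L : List ((g : ℕ) × G.Walk d.1 ((R l).f g)), L.length = k ∧
        L.Pairwise (fun a b => ∀ x, x ∈ a.2.support → x ∈ b.2.support → x = d.1) :=
    fun d l => dom_fan ω (hDdom d.1 d.2) (hRmem l) k
  choose W hWlen hWpw using hWex
  -- `k` pairwise disjoint bars, each visiting every ray.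
  obtain ⟨Rb, hRb⟩ := ω.nonempty
  obtain ⟨LB, hLBlen, hLBvis, hLBpw⟩ :=
    bars ω ((List.finRange m).map R) (by
      intro R' hR'
      obtain ⟨i, _, rfl⟩ := List.mem_map.mp hR'
      exact hRmem i) hRb k
  -- Choose the cut-off indices `Q l` above all fan endpoints and bar hits.
  have hQex : ∀ l : Fin m, ∃ Q : ℕ,
      (∀ (d : {v // v ∈ D}) (a : (g : ℕ) × G.Walk d.1 ((R l).f g)),
        a ∈ W d l → a.1 < Q) ∧
      (∀ a ∈ LB, ∀ t, (R l).f t ∈ a.2.2.support → t < Q) := by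
    intro l
    have hfin1 : (⋃ d : {v // v ∈ D}, {g | g ∈ (W d l).map Sigma.fst}).Finite :=
      Set.finite_iUnion fun d => ((W d l).map Sigma.fst).finite_toSet
    have hFB : ({x | ∃ a ∈ LB, x ∈ a.2.2.support} : Set V).Finite := by
      refine Set.Finite.subset (LB.finite_toSet.biUnion
        fun a (_ : a ∈ {a | a ∈ LB}) => a.2.2.support.finite_toSet) ?_
      rintro x ⟨a, ha, hx⟩
      exact Set.mem_biUnion ha hx
    have hfin2 : {t : ℕ | (R l).f t ∈ {x | ∃ a ∈ LB, x ∈ a.2.2.support}}.Finite :=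
      ray_hits_finite (R l) hFB
    obtain ⟨b, hb⟩ := (hfin1.union hfin2).bddAbove
    refine ⟨b + 1, ?_, ?_⟩
    · intro d a ha
      have : a.1 ∈ (⋃ d : {v // v ∈ D}, {g | g ∈ (W d l).map Sigma.fst}) :=
        Set.mem_iUnion.mpr ⟨d, List.mem_map.mpr ⟨a, ha, rfl⟩⟩
      have := hb (Or.inl this)
      omega
    · intro a ha t ht
      have : t ∈ {t : ℕ | (R l).f t ∈ {x | ∃ a ∈ LB, x ∈ a.2.2.support}} := ⟨a, ha, ht⟩
      have := hb (Or.inr this)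
      omega
  choose Q hQ1 hQ2 using hQex
  set x : Fin m → V := fun l => (R l).f (Q l) with hx_def
  have hxD : ∀ l, x l ∉ D := fun l => hRD l (Q l)
  have hxinj : Function.Injective x := fun l l' hll => hrayinj hll
  have hXcard : (D ∪ Finset.univ.image x).card = k := by
    rw [Finset.card_union_of_disjoint, hDcard,
      Finset.card_image_of_injective _ hxinj, Finset.card_univ, Fintype.card_fin]
    · omega
    · rw [Finset.disjoint_right]
      intro v hv
      obtain ⟨l, _, rfl⟩ := Finset.mem_image.mp hv
      exact hxD l
  refine ⟨D ∪ Finset.univ.image x, hXcard, ?_⟩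
  intro s hs hcard
  have htails : ∀ R' ∈ ω.rays, HasTailIn R' s.1.B := hs
  have hfinS : (s.1.A ∩ s.1.B).Finite := s.2
  have hdomB : ∀ d ∈ D, d ∈ s.1.B := fun d hd => dom_mem_B ω s.2 htails (hDdom d hd)
  by_cases hSW : ∃ l : Fin m, ∀ g ≤ Q l, (R l).f g ∈ s.1.A \ s.1.B
  · -- some ray is swallowed from below: derive a contradiction with `hcard`
    exfalso
    obtain ⟨l1, hl1⟩ := hSW
    by_cases hBA : ∃ d ∈ D, d ∉ s.1.A
    · -- a dominating vertex on the far side: its fan crosses the separator k times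
      obtain ⟨d, hd, hdA⟩ := hBA
      set L := W ⟨d, hd⟩ l1 with hL_def
      have hlen : L.length = k := hWlen _ _
      have hz : ∀ j : Fin L.length,
          ∃ z, z ∈ (L.get j).2.support ∧ z ∈ s.1.A ∩ s.1.B := by
        intro j
        have hmem : L.get j ∈ L := L.get_mem j
        have hend : (R l1).f ((L.get j).1) ∈ s.1.A \ s.1.B :=
          hl1 _ (le_of_lt (hQ1 l1 ⟨d, hd⟩ _ hmem))
        exact walk_scan s.1 (L.get j).2
          ⟨_, SimpleGraph.Walk.end_mem_support _, hend⟩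
          ⟨d, SimpleGraph.Walk.start_mem_support _, fun hc => hdA hc.1⟩
      choose z hz1 hz2 using hz
      have hzinj : Function.Injective z := by
        intro j j' hjj
        by_contra hne
        have hpw := hWpw ⟨d, hd⟩ l1
        rw [List.pairwise_iff_get] at hpw
        have hzd : z j = d := by
          rcases lt_trichotomy j j' with hlt | heq | hlt
          · exact hpw j j' hlt (z j) (hz1 j) (hjj ▸ hz1 j')
          · exact absurd heq hne
          · exact hpw j' j hlt (z j) (hjj ▸ hz1 j') (hz1 j)
        exact hdA (hzd ▸ (hz2 j).1)
      have hle := card_le_of_inj hfinS z hzinj hz2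
      rw [hlen] at hle
      omega
    · push_neg at hBA
      have hDS : ∀ d ∈ D, d ∈ s.1.A ∩ s.1.B := fun d hd => ⟨hBA d hd, hdomB d hd⟩
      by_cases hhit : ∀ a ∈ LB, ∃ y ∈ a.2.2.support, y ∉ s.1.A \ s.1.B
      · -- every bar crosses the separator: k disjoint bars give k separator vertices
        have hz : ∀ j : Fin LB.length,
            ∃ z, z ∈ (LB.get j).2.2.support ∧ z ∈ s.1.A ∩ s.1.B := by
          intro j
          have hmem : LB.get j ∈ LB := LB.get_mem j
          obtain ⟨y, hy1, t, rfl⟩ := hLBvis (LB.get j) hmem (R l1)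
            (List.mem_map.mpr ⟨l1, List.mem_finRange l1, rfl⟩)
          have hyA : (R l1).f t ∈ s.1.A \ s.1.B :=
            hl1 t (le_of_lt (hQ2 l1 _ hmem t hy1))
          exact walk_scan s.1 _ ⟨_, hy1, hyA⟩ (hhit _ hmem)
        choose z hz1 hz2 using hz
        have hzinj : Function.Injective z := by
          intro j j' hjj
          by_contra hne
          have hpw := hLBpw
          rw [List.pairwise_iff_get] at hpw
          rcases lt_trichotomy j j' with hlt | heq | hlt
          · exact hpw j j' hlt (z j) (hz1 j) (hjj ▸ hz1 j')
          · exact hne heq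
          · exact hpw j' j hlt (z j) (hjj ▸ hz1 j') (hz1 j)
        have hle := card_le_of_inj hfinS z hzinj hz2
        rw [hLBlen] at hle
        omega
      · -- some bar lies wholly in `A \ B`: every ray is crossed above it
        push_neg at hhit
        obtain ⟨a0, ha0, ha0sub⟩ := hhit
        have hU : ∀ l : Fin m, ∃ t, (R l).f t ∈ s.1.A ∩ s.1.B := by
          intro l
          obtain ⟨y, hy1, t, rfl⟩ := hLBvis a0 ha0 (R l)
            (List.mem_map.mpr ⟨l, List.mem_finRange l, rfl⟩)
          have hyA : (R l).f t ∈ s.1.A \ s.1.B := ha0sub _ hy1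
          obtain ⟨t', _, ht'⟩ := ray_firstB s.1 (R l) (htails _ (hRmem l)) hyA
          exact ⟨t', ht'⟩
        choose U hUS using hU
        set T : Finset V := D ∪ Finset.univ.image (fun l => (R l).f (U l)) with hT_def
        have hTcard : T.card = k := by
          rw [hT_def, Finset.card_union_of_disjoint, hDcard,
            Finset.card_image_of_injective, Finset.card_univ, Fintype.card_fin]
          · omega
          · exact fun l l' hll => hrayinj hll
          · rw [Finset.disjoint_right]
            intro v hv
            obtain ⟨l, _, rfl⟩ := Finset.mem_image.mp hv
            exact hRD l (U l)
        have hTsub : T ⊆ hfinS.toFinset := by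
          intro v hv
          rw [Set.Finite.mem_toFinset]
          rcases Finset.mem_union.mp hv with hv | hv
          · exact hDS v hv
          · obtain ⟨l, _, rfl⟩ := Finset.mem_image.mp hv
            exact hUS l
        have := Finset.card_le_card hTsub
        rw [hTcard] at this
        rw [Set.ncard_eq_toFinset_card _ hfinS] at hcard
        omega
  · -- main case: counting 2a + c separator vertices
    push_neg at hSW
    have hu : ∀ l : Fin m, ∃ tt, x l ∈ s.1.A →
        (Q l ≤ tt ∧ (R l).f tt ∈ s.1.A ∩ s.1.B) := by
      intro l
      by_cases hxA : x l ∈ s.1.A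
      · by_cases hxB : x l ∈ s.1.B
        · exact ⟨Q l, fun _ => ⟨le_refl _, hxA, hxB⟩⟩
        · obtain ⟨t, ht1, ht2⟩ :=
            ray_firstB s.1 (R l) (htails _ (hRmem l)) (g := Q l) ⟨hxA, hxB⟩
          exact ⟨t, fun _ => ⟨le_of_lt ht1, ht2⟩⟩
      · exact ⟨0, fun hc => absurd hc hxA⟩
    choose u hu using hu
    have ht : ∀ l : Fin m, ∃ tt, x l ∈ s.1.A \ s.1.B →
        (tt < Q l ∧ (R l).f tt ∈ s.1.A ∩ s.1.B) := by
      intro l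
      by_cases hxAB : x l ∈ s.1.A \ s.1.B
      · obtain ⟨g, hg1, hg2⟩ := hSW l
        obtain ⟨t, ht1, ht2⟩ := ray_lastB s.1 (R l) hxAB ⟨g, hg1, hg2⟩
        exact ⟨t, fun _ => ⟨ht1, ht2⟩⟩
      · exact ⟨0, fun hc => absurd hc hxAB⟩
    choose tl htl using ht
    set IA : Finset (Fin m) := Finset.univ.filter (fun l => x l ∈ s.1.A) with hIA_def
    set JA : Finset (Fin m) :=
      Finset.univ.filter (fun l => x l ∈ s.1.A \ s.1.B) with hJA_def
    set DA : Finset V := D.filter (fun v => v ∈ s.1.A) with hDA_def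
    set UF : Finset V := IA.image (fun l => (R l).f (u l)) with hUF_def
    set TF : Finset V := JA.image (fun l => (R l).f (tl l)) with hTF_def
    have hUFcard : UF.card = IA.card := by
      rw [hUF_def]
      exact Finset.card_image_of_injOn fun l _ l' _ hll => hrayinj hll
    have hTFcard : TF.card = JA.card := by
      rw [hTF_def]
      exact Finset.card_image_of_injOn fun l _ l' _ hll => hrayinj hll
    have hUFTF : Disjoint UF TF := by
      rw [Finset.disjoint_left]
      rintro v hvU hvT
      obtain ⟨l, hl, rfl⟩ := Finset.mem_image.mp hvU
      obtain ⟨l', hl', heq⟩ := Finset.mem_image.mp hvT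
      have hll : l' = l := hrayinj heq
      subst hll
      have h1 : Q l' ≤ u l' := (hu l' (Finset.mem_filter.mp hl).2).1
      have h2 : tl l' < Q l' := (htl l' (Finset.mem_filter.mp hl').2).1
      have : tl l' = u l' := (R l').inj heq
      omega
    have hDAUT : Disjoint DA (UF ∪ TF) := by
      rw [Finset.disjoint_right]
      intro v hv
      rcases Finset.mem_union.mp hv with hv | hv
      · obtain ⟨l, _, rfl⟩ := Finset.mem_image.mp hv
        exact fun hc => hRD l (u l) (Finset.mem_of_mem_filter _ hc)
      · obtain ⟨l, _, rfl⟩ := Finset.mem_image.mp hv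
        exact fun hc => hRD l (tl l) (Finset.mem_of_mem_filter _ hc)
    have hTsub : DA ∪ (UF ∪ TF) ⊆ hfinS.toFinset := by
      intro v hv
      rw [Set.Finite.mem_toFinset]
      rcases Finset.mem_union.mp hv with hv | hv
      · obtain ⟨hvD, hvA⟩ := Finset.mem_filter.mp hv
        exact ⟨hvA, hdomB v hvD⟩
      rcases Finset.mem_union.mp hv with hv | hv
      · obtain ⟨l, hl, rfl⟩ := Finset.mem_image.mp hv
        exact (hu l (Finset.mem_filter.mp hl).2).2
      · obtain ⟨l, hl, rfl⟩ := Finset.mem_image.mp hv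
        exact (htl l (Finset.mem_filter.mp hl).2).2
    have hmain : DA.card + IA.card + JA.card < k := by
      have h1 := Finset.card_le_card hTsub
      rw [Finset.card_union_of_disjoint hDAUT, Finset.card_union_of_disjoint hUFTF,
        hUFcard, hTFcard] at h1
      rw [Set.ncard_eq_toFinset_card _ hfinS] at hcard
      omega
    -- now express the two sides of the goal
    set XX : Finset V := D ∪ Finset.univ.image x with hXX_def
    have hXA : s.1.A ∩ ↑XX = ↑(XX.filter (fun v => v ∈ s.1.A)) := by
      ext v
      simp only [Set.mem_inter_iff, Finset.coe_filter, Set.mem_setOf_eq]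
      tauto
    have hXB : s.1.B ∩ ↑XX = ↑(XX.filter (fun v => v ∈ s.1.B)) := by
      ext v
      simp only [Set.mem_inter_iff, Finset.coe_filter, Set.mem_setOf_eq]
      tauto
    rw [hXA, hXB, Set.ncard_coe_finset, Set.ncard_coe_finset]
    -- compute the filtered cards
    have himfilter : ∀ (P : V → Prop) (inst : DecidablePred P),
        @Finset.filter V P inst (Finset.univ.image x) =
        (Finset.univ.filter (fun l => P (x l))).image x := by
      intro P inst
      ext v
      constructor
      · intro hv
        obtain ⟨hvim, hvP⟩ := Finset.mem_filter.mp hv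
        obtain ⟨l, _, rfl⟩ := Finset.mem_image.mp hvim
        exact Finset.mem_image.mpr ⟨l, Finset.mem_filter.mpr ⟨Finset.mem_univ l, hvP⟩, rfl⟩
      · intro hv
        obtain ⟨l, hl, rfl⟩ := Finset.mem_image.mp hv
        exact Finset.mem_filter.mpr ⟨Finset.mem_image.mpr ⟨l, Finset.mem_univ l, rfl⟩,
          (Finset.mem_filter.mp hl).2⟩
    have hfilterD : ∀ (P : V → Prop) (inst : DecidablePred P),
        @Finset.filter V P inst XX =
        (@Finset.filter V P inst D) ∪ ((Finset.univ.filter (fun l => P (x l))).image x) := by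
      intro P inst
      rw [hXX_def, Finset.filter_union, himfilter]
    have hdisjDimg : ∀ (s1 : Finset V) (s2 : Finset (Fin m)), s1 ⊆ D →
        Disjoint s1 (s2.image x) := by
      intro s1 s2 hsub
      rw [Finset.disjoint_right]
      intro v hv
      obtain ⟨l, _, rfl⟩ := Finset.mem_image.mp hv
      exact fun hc => hxD l (hsub hc)
    have hXAcard : (XX.filter (fun v => v ∈ s.1.A)).card = DA.card + IA.card := by
      rw [hfilterD, Finset.card_union_of_disjoint
        (hdisjDimg _ _ (Finset.filter_subset _ _)),
        Finset.card_image_of_injective _ hxinj]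
    have hXABcard : (XX.filter (fun v => v ∈ s.1.A \ s.1.B)).card = JA.card := by
      rw [hfilterD, Finset.card_union_of_disjoint
        (hdisjDimg _ _ (Finset.filter_subset _ _)),
        Finset.card_image_of_injective _ hxinj]
      have : D.filter (fun v => v ∈ s.1.A \ s.1.B) = ∅ := by
        rw [Finset.filter_eq_empty_iff]
        intro v hv hc
        exact hc.2 (hdomB v hv)
      rw [this, Finset.card_empty, Nat.zero_add]
    have hpart : (XX.filter (fun v => v ∈ s.1.B)).card
        + (XX.filter (fun v => v ∈ s.1.A \ s.1.B)).card = k := by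
      rw [← Finset.card_union_of_disjoint, ← hXcard]
      · congr 1
        ext v
        simp only [Finset.mem_union, Finset.mem_filter]
        constructor
        · rintro (h | h) <;> exact h.1
        · intro hv
          by_cases hvB : v ∈ s.1.B
          · exact Or.inl ⟨hv, hvB⟩
          · exact Or.inr ⟨hv, (s.1.mem_A_or_B v).resolve_right hvB, hvB⟩
      · rw [Finset.disjoint_left]
        intro v hv hv'
        exact (Finset.mem_filter.mp hv').2.2 (Finset.mem_filter.mp hv).2
    rw [hXAcard]
    omega
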